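/- For every δ > 0, one has 0 ≤ ∫₀¹ du / (√u · √(u + δ)) − log(4/δ) ≤ δ/2. -/

import Mathlib

open Real MeasureTheory

theorem stmt5 (δ : ℝ) (hδ : 0 < δ) :
    0 ≤ (∫ u in Set.Ioo (0:ℝ) 1, 1 / (Real.sqrt u * Real.sqrt (u + δ))) - Real.log (4 / δ) ∧
    (∫ u in Set.Ioo (0:ℝ) 1, 1 / (Real.sqrt u * Real.sqrt (u + δ))) - Real.log (4 / δ) ≤ δ / 2 := by
  set f : ℝ → ℝ := fun u => 1 / (Real.sqrt u * Real.sqrt (u + δ)) with hf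
  set F : ℝ → ℝ := fun u => 2 * Real.log (Real.sqrt u + Real.sqrt (u + δ)) with hF
  have hδ' : ∀ u : ℝ, 0 ≤ u → 0 < Real.sqrt (u + δ) := fun u hu =>
    Real.sqrt_pos.2 (by linarith)
  -- integrability
  have hint : IntervalIntegrable f volume 0 1 := by
    have h1 : IntervalIntegrable (fun u : ℝ => (Real.sqrt δ)⁻¹ * u ^ (-(1/2) : ℝ)) volume 0 1 :=
      (intervalIntegral.intervalIntegrable_rpow' (by norm_num)).const_mul _
    rw [intervalIntegrable_iff_integrableOn_Ioo_of_le (by norm_num)] at h1 ⊢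
    refine h1.mono' ?_ ?_
    · refine Measurable.aestronglyMeasurable ?_
      simp only [hf, one_div]
      exact ((Real.continuous_sqrt.mul (Real.continuous_sqrt.comp
        (continuous_id.add continuous_const))).measurable).inv
    · filter_upwards [ae_restrict_mem measurableSet_Ioo] with u hu
      have hu0 : 0 < u := hu.1
      have hsd : Real.sqrt δ ≤ Real.sqrt (u + δ) := Real.sqrt_le_sqrt (by linarith)
      have h2 : Real.sqrt δ * Real.sqrt u ≤ Real.sqrt (u + δ) * Real.sqrt u :=
        mul_le_mul_of_nonneg_right hsd (Real.sqrt_nonneg u)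
      have hsu : 0 < Real.sqrt u := Real.sqrt_pos.2 hu0
      have : f u = 1 / (Real.sqrt u * Real.sqrt (u + δ)) := rfl
      rw [Real.norm_eq_abs, abs_of_nonneg (by positivity : (0:ℝ) ≤ f u)]
      have hrw : u ^ (-(1/2) : ℝ) = (Real.sqrt u)⁻¹ := by
        rw [Real.rpow_neg hu0.le, Real.sqrt_eq_rpow]
      rw [this, hrw]
      rw [one_div, mul_inv]
      rw [mul_comm]
      gcongr
  -- derivative
  have hderiv : ∀ u ∈ Set.Ioo (0:ℝ) 1, HasDerivAt F (f u) u := by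
    intro u hu
    have hu0 : 0 < u := hu.1
    have hud : 0 < u + δ := by linarith
    have h1 : HasDerivAt (fun x : ℝ => Real.sqrt x + Real.sqrt (x + δ))
        (1 / (2 * Real.sqrt u) + 1 / (2 * Real.sqrt (u + δ))) u := by
      refine (Real.hasDerivAt_sqrt hu0.ne').add ?_
      have := (Real.hasDerivAt_sqrt hud.ne').comp u ((hasDerivAt_id u).add_const δ)
      simpa [Function.comp_def] using this
    have hpos : 0 < Real.sqrt u + Real.sqrt (u + δ) := by positivity
    have h2 := (Real.hasDerivAt_log hpos.ne').comp u h1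
    have h3 := h2.const_mul (2:ℝ)
    refine h3.congr_deriv ?_
    have hsu : Real.sqrt u > 0 := Real.sqrt_pos.2 hu0
    have hsd : Real.sqrt (u + δ) > 0 := Real.sqrt_pos.2 hud
    have e1 : Real.sqrt u * Real.sqrt u = u := Real.mul_self_sqrt hu0.le
    have e2 : Real.sqrt (u + δ) * Real.sqrt (u + δ) = u + δ := Real.mul_self_sqrt hud.le
    simp only [hf, Function.comp]
    field_simp
    ring_nf
  -- continuity of F on Icc
  have hcont : ContinuousOn F (Set.Icc (0:ℝ) 1) := by
    refine continuousOn_const.mul (ContinuousOn.log ?_ ?_)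
    · exact Real.continuous_sqrt.continuousOn.add
        ((Real.continuous_sqrt.comp (continuous_id.add continuous_const)).continuousOn)
    · intro x hx
      have h := hδ' x hx.1
      have := Real.sqrt_nonneg x
      exact ne_of_gt (by linarith)
  -- integral value
  have hval : (∫ u in Set.Ioo (0:ℝ) 1, f u) = F 1 - F 0 := by
    rw [← MeasureTheory.integral_Ioc_eq_integral_Ioo,
      ← intervalIntegral.integral_of_le (by norm_num : (0:ℝ) ≤ 1)]
    exact intervalIntegral.integral_eq_sub_of_hasDeriv_right_of_le (by norm_num) hcont
      (fun x hx => (hderiv x hx).hasDerivWithinAt) hint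
  set s := Real.sqrt (1 + δ) with hs
  have hs1 : 1 ≤ s := by
    nlinarith [Real.sq_sqrt (show (0:ℝ) ≤ 1 + δ by linarith), Real.sqrt_nonneg (1 + δ), hs]
  have hs2 : s ≤ 1 + δ / 2 := by
    rw [hs, show (1 + δ/2 : ℝ) = Real.sqrt ((1 + δ/2)^2) from (Real.sqrt_sq (by linarith)).symm]
    exact Real.sqrt_le_sqrt (by nlinarith)
  have hkey : (∫ u in Set.Ioo (0:ℝ) 1, f u) - Real.log (4/δ) = 2 * Real.log ((1 + s)/2) := by
    rw [hval]
    simp only [hF]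
    rw [Real.sqrt_one, Real.sqrt_zero, zero_add, zero_add]
    rw [Real.log_sqrt hδ.le, Real.log_div (by norm_num) hδ.ne',
      Real.log_div (by linarith : (1:ℝ) + s ≠ 0) (by norm_num : (2:ℝ) ≠ 0)]
    have h4 : Real.log 4 = 2 * Real.log 2 := by
      rw [show (4:ℝ) = 2^2 by norm_num, Real.log_pow]; push_cast; ring
    rw [h4]; ring
  constructor
  · rw [hkey]
    have := Real.log_nonneg (by linarith : 1 ≤ (1 + s)/2)
    linarith
  · rw [hkey]
    have := Real.log_le_sub_one_of_pos (by linarith : 0 < (1 + s)/2)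
    linarith
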